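/- Lindström–Gessel–Viennot: for any n-network N, the signed sum of all families of n paths equals the signed sum of the non-intersecting families of n paths: Σ_{Λ ∈ P(N)} sign(Λ) = Σ_{Λ ∈ NIP(N)} sign(Λ). Equivalently, there is a sign-reversing involution on families of n paths whose fixed points are exactly the non-intersecting families and which preserves the multiset of steps. -/

import Mathlib

variable {V : Type*}

/-- A (directed) path, as a nonempty list of pairwise distinct nodes chained by `R`. -/
def IsPathList (R : V → V → Prop) (l : List V) : Prop :=
  l ≠ [] ∧ l.Chain' R ∧ l.Nodup

/-- `IsFamily R src snk F σ` : `F` is a family of `n` paths, the `i`-th going from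
source `src i` to sink `snk (σ i)`. -/
def IsFamily {n : ℕ} (R : V → V → Prop) (src snk : Fin n → V)
    (F : Fin n → List V) (σ : Equiv.Perm (Fin n)) : Prop :=
  ∀ i, IsPathList R (F i) ∧ (F i).head? = some (src i) ∧
    (F i).getLast? = some (snk (σ i))

/-- A family of paths is non-intersecting when no node belongs to two of its paths. -/
def NonIntersecting {n : ℕ} (F : Fin n → List V) : Prop :=
  ∀ i j, i ≠ j → ∀ v ∈ F i, v ∉ F j

namespace LGVaux
attribute [local instance] Classical.propDecidable

variable {V : Type*}

/-! ### Splitting a list at the first element satisfying a predicate -/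

noncomputable def pre (P : V → Prop) (l : List V) : List V :=
  l.takeWhile (fun u => !decide (P u))

noncomputable def suf (P : V → Prop) (l : List V) : List V :=
  l.dropWhile (fun u => !decide (P u))

lemma pre_append_suf (P : V → Prop) (l : List V) : pre P l ++ suf P l = l :=
  List.takeWhile_append_dropWhile ..

lemma not_of_mem_pre {P : V → Prop} {l : List V} {u : V} (h : u ∈ pre P l) : ¬ P u := by
  have := List.mem_takeWhile_imp h
  simpa using this

lemma suf_ne_nil {P : V → Prop} {l : List V} (h : ∃ v ∈ l, P v) : suf P l ≠ [] := by
  intro hn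
  obtain ⟨v, hv, hPv⟩ := h
  have := List.dropWhile_eq_nil_iff.mp hn v hv
  simp [hPv] at this

lemma head_suf {P : V → Prop} {l : List V} (h : suf P l ≠ []) : P ((suf P l).head h) := by
  have := List.head_dropWhile_not (fun u => !decide (P u)) h
  simpa [suf] using this

lemma eq_pre_append {P : V → Prop} {l : List V} (h : suf P l ≠ []) :
    l = pre P l ++ (suf P l).head h :: (suf P l).tail := by
  conv_lhs => rw [← pre_append_suf P l]
  rw [List.cons_head_tail]

lemma pre_eq_of (P : V → Prop) (a : List V) (v : V) (d : List V)
    (ha : ∀ u ∈ a, ¬ P u) (hv : P v) :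
    pre P (a ++ v :: d) = a ∧ suf P (a ++ v :: d) = v :: d := by
  induction a with
  | nil => simp [pre, suf, List.takeWhile, List.dropWhile, hv]
  | cons x a ih =>
    have hx : ¬ P x := ha x (by simp)
    have ih' := ih (fun u hu => ha u (by simp [hu]))
    have hxb : (fun u => !decide (P u)) x = true := by simpa using hx
    constructor
    · show List.takeWhile _ (x :: (a ++ v :: d)) = _
      rw [List.takeWhile_cons_of_pos (p := fun u => !decide (P u)) (l := a ++ v :: d) (a := x) hxb]
      exact congrArg (x :: ·) ih'.1
    · show List.dropWhile _ (x :: (a ++ v :: d)) = _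
      rw [List.dropWhile_cons_of_pos (p := fun u => !decide (P u)) (l := a ++ v :: d) (a := x) hxb]
      exact ih'.2

/-! ### Chains in an acyclic graph -/

lemma nodup_of_chain' {R : V → V → Prop}
    (hacyc : ∀ (x : V) (l : List V), l ≠ [] → List.Chain R x l → l.getLast? ≠ some x) :
    ∀ l : List V, l.Chain' R → l.Nodup := by
  intro l
  induction l with
  | nil => simp
  | cons x l ih =>
    intro hc
    refine List.nodup_cons.mpr ⟨?_, ih hc.tail⟩
    intro hx
    obtain ⟨l₁, l₂, rfl⟩ := List.append_of_mem hx
    have hchain : List.Chain R x (l₁ ++ x :: l₂) := hc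
    have h2 : List.Chain R x (l₁ ++ [x]) := (List.isChain_split (l₁ := x :: l₁).mp hchain).1
    exact hacyc x (l₁ ++ [x]) (by simp) h2 (by simp)

lemma chain'_mid {R : V → V → Prop} (X : List V) (v : V) (Y : List V) :
    List.Chain' R (X ++ v :: Y) ↔ List.Chain' R (X ++ [v]) ∧ List.Chain' R (v :: Y) := by
  show List.IsChain R (X ++ v :: Y) ↔ List.IsChain R (X ++ [v]) ∧ List.IsChain R (v :: Y)
  rw [show X ++ v :: Y = (X ++ [v]) ++ Y by simp, List.isChain_append, List.isChain_cons]
  simp only [List.getLast?_concat, Option.mem_def, Option.some_inj]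
  constructor
  · rintro ⟨h1, h2, h3⟩
    exact ⟨h1, fun y hy => h3 v rfl y hy, h2⟩
  · rintro ⟨h1, h2, h3⟩
    exact ⟨h1, h3, fun x hx y hy => hx ▸ h2 y hy⟩

lemma getLast?_append_cons (X : List V) (v : V) (Y : List V) :
    (X ++ v :: Y).getLast? = (v :: Y).getLast? := by
  rw [List.getLast?_append]
  cases h : (v :: Y).getLast? with
  | none => exact absurd h (by simp)
  | some x => rfl

lemma head?_append_cons (X : List V) (v : V) (Y : List V) :
    (X ++ v :: Y).head? = X.head?.or (some v) := by
  rw [List.head?_append]; rfl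

/-! ### The tail-swapping construction -/

variable {n : ℕ}

def Ix (F : Fin n → List V) : Prop := ∃ i j, i ≠ j ∧ ∃ v, v ∈ F i ∧ v ∈ F j

def hasIx (F : Fin n → List V) (i : Fin n) : Prop := ∃ j, j ≠ i ∧ ∃ v, v ∈ F i ∧ v ∈ F j

def onOther (F : Fin n → List V) (i : Fin n) (v : V) : Prop := ∃ j, j ≠ i ∧ v ∈ F j

variable {F : Fin n → List V}

lemma hasIx_ne (h : Ix F) : (Finset.univ.filter (hasIx F)).Nonempty := by
  obtain ⟨i, j, hij, v, hvi, hvj⟩ := h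
  exact ⟨i, Finset.mem_filter.mpr ⟨Finset.mem_univ _, j, Ne.symm hij, v, hvi, hvj⟩⟩

noncomputable def i0 (h : Ix F) : Fin n :=
  (Finset.univ.filter (hasIx F)).min' (hasIx_ne h)

lemma hasIx_i0 (h : Ix F) : hasIx F (i0 h) :=
  (Finset.mem_filter.mp (Finset.min'_mem _ (hasIx_ne h))).2

lemma i0_min (h : Ix F) {i : Fin n} (hi : hasIx F i) : i0 h ≤ i :=
  Finset.min'_le _ _ (Finset.mem_filter.mpr ⟨Finset.mem_univ _, hi⟩)

lemma exists_onOther (h : Ix F) : ∃ v ∈ F (i0 h), onOther F (i0 h) v := by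
  obtain ⟨j, hj, v, hvi, hvj⟩ := hasIx_i0 h
  exact ⟨v, hvi, j, hj, hvj⟩

noncomputable def v0 (h : Ix F) : V :=
  (suf (onOther F (i0 h)) (F (i0 h))).head (suf_ne_nil (exists_onOther h))

noncomputable def aL (h : Ix F) : List V := pre (onOther F (i0 h)) (F (i0 h))

noncomputable def bL (h : Ix F) : List V := (suf (onOther F (i0 h)) (F (i0 h))).tail

lemma F_i0_eq (h : Ix F) : F (i0 h) = aL h ++ v0 h :: bL h :=
  eq_pre_append (suf_ne_nil (exists_onOther h))

lemma onOther_v0 (h : Ix F) : onOther F (i0 h) (v0 h) :=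
  head_suf (suf_ne_nil (exists_onOther h))

lemma v0_mem_i0 (h : Ix F) : v0 h ∈ F (i0 h) := by rw [F_i0_eq h]; simp

lemma not_onOther_of_mem_aL (h : Ix F) {u : V} (hu : u ∈ aL h) : ¬ onOther F (i0 h) u :=
  not_of_mem_pre hu

noncomputable def j0 (h : Ix F) : Fin n :=
  (Finset.univ.filter fun j => j ≠ i0 h ∧ v0 h ∈ F j).min' (by
    obtain ⟨j, hj, hv⟩ := onOther_v0 h
    exact ⟨j, Finset.mem_filter.mpr ⟨Finset.mem_univ _, hj, hv⟩⟩)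

lemma j0_spec (h : Ix F) : j0 h ≠ i0 h ∧ v0 h ∈ F (j0 h) := by
  have hne : (Finset.univ.filter fun j => j ≠ i0 h ∧ v0 h ∈ F j).Nonempty := by
    obtain ⟨j, hj, hv⟩ := onOther_v0 h
    exact ⟨j, Finset.mem_filter.mpr ⟨Finset.mem_univ _, hj, hv⟩⟩
  have := Finset.min'_mem _ hne
  exact (Finset.mem_filter.mp this).2

lemma j0_min (h : Ix F) {j : Fin n} (hj : j ≠ i0 h) (hv : v0 h ∈ F j) : j0 h ≤ j :=
  Finset.min'_le _ _ (Finset.mem_filter.mpr ⟨Finset.mem_univ _, hj, hv⟩)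

lemma i0_lt_j0 (h : Ix F) : i0 h < j0 h :=
  lt_of_le_of_ne
    (i0_min h ⟨i0 h, Ne.symm (j0_spec h).1, v0 h, (j0_spec h).2, v0_mem_i0 h⟩)
    (Ne.symm (j0_spec h).1)

noncomputable def cL (h : Ix F) : List V := pre (fun u => u = v0 h) (F (j0 h))

noncomputable def dL (h : Ix F) : List V := (suf (fun u => u = v0 h) (F (j0 h))).tail

lemma suf2_ne_nil (h : Ix F) : suf (fun u => u = v0 h) (F (j0 h)) ≠ [] :=
  suf_ne_nil ⟨v0 h, (j0_spec h).2, rfl⟩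

lemma F_j0_eq (h : Ix F) : F (j0 h) = cL h ++ v0 h :: dL h := by
  have hne := suf2_ne_nil h
  have heq := eq_pre_append (P := fun u => u = v0 h) hne
  rw [head_suf (P := fun u => u = v0 h) hne] at heq
  exact heq

lemma ne_v0_of_mem_cL (h : Ix F) {u : V} (hu : u ∈ cL h) : u ≠ v0 h :=
  not_of_mem_pre (P := fun u => u = v0 h) hu

noncomputable def swapF (h : Ix F) : Fin n → List V :=
  Function.update (Function.update F (i0 h) (aL h ++ v0 h :: dL h)) (j0 h)
    (cL h ++ v0 h :: bL h)

lemma swapF_apply_i0 (h : Ix F) : swapF h (i0 h) = aL h ++ v0 h :: dL h := by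
  unfold swapF
  rw [Function.update_of_ne (Ne.symm (j0_spec h).1), Function.update_self]

lemma swapF_apply_j0 (h : Ix F) : swapF h (j0 h) = cL h ++ v0 h :: bL h := by
  unfold swapF
  rw [Function.update_self]

lemma swapF_apply_other (h : Ix F) {k : Fin n} (h1 : k ≠ i0 h) (h2 : k ≠ j0 h) :
    swapF h k = F k := by
  unfold swapF
  rw [Function.update_of_ne h2, Function.update_of_ne h1]

lemma ix_swapF (h : Ix F) : Ix (swapF h) :=
  ⟨i0 h, j0 h, Ne.symm (j0_spec h).1, v0 h,
    by rw [swapF_apply_i0 h]; simp, by rw [swapF_apply_j0 h]; simp⟩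

lemma mem_of_mem_aL (h : Ix F) {u : V} (hu : u ∈ aL h) : u ∈ F (i0 h) := by
  rw [F_i0_eq h]; exact List.mem_append_left _ hu

lemma mem_of_mem_bL (h : Ix F) {u : V} (hu : u ∈ bL h) : u ∈ F (i0 h) := by
  rw [F_i0_eq h]; exact List.mem_append_right _ (List.mem_cons_of_mem _ hu)

lemma mem_of_mem_cL (h : Ix F) {u : V} (hu : u ∈ cL h) : u ∈ F (j0 h) := by
  rw [F_j0_eq h]; exact List.mem_append_left _ hu

lemma mem_of_mem_dL (h : Ix F) {u : V} (hu : u ∈ dL h) : u ∈ F (j0 h) := by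
  rw [F_j0_eq h]; exact List.mem_append_right _ (List.mem_cons_of_mem _ hu)

lemma mem_swapF (h : Ix F) {j : Fin n} {v : V} (hv : v ∈ swapF h j) :
    v ∈ F j ∨ v ∈ F (i0 h) ∨ v ∈ F (j0 h) := by
  by_cases hj : j = j0 h
  · subst hj
    rw [swapF_apply_j0 h] at hv
    rcases List.mem_append.mp hv with hc | hc
    · exact Or.inr (Or.inr (mem_of_mem_cL h hc))
    · rcases List.mem_cons.mp hc with rfl | hb
      · exact Or.inr (Or.inr ((j0_spec h).2))
      · exact Or.inr (Or.inl (mem_of_mem_bL h hb))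
  · by_cases hi : j = i0 h
    · subst hi
      rw [swapF_apply_i0 h] at hv
      rcases List.mem_append.mp hv with ha | hc
      · exact Or.inr (Or.inl (mem_of_mem_aL h ha))
      · rcases List.mem_cons.mp hc with rfl | hd
        · exact Or.inr (Or.inl (v0_mem_i0 h))
        · exact Or.inr (Or.inr (mem_of_mem_dL h hd))
    · rw [swapF_apply_other h hi hj] at hv
      exact Or.inl hv


theorem swap_inv (hNd : ∀ i, (F i).Nodup) (h : Ix F) (h' : Ix (swapF h)) :
    i0 h' = i0 h ∧ v0 h' = v0 h ∧ j0 h' = j0 h ∧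
    aL h' = aL h ∧ bL h' = dL h ∧ cL h' = cL h ∧ dL h' = bL h ∧
    swapF h' = F := by
  -- no index below `i0 h` meets another path of the swapped family
  have hA : ∀ i, i < i0 h → ¬ hasIx (swapF h) i := by
    rintro i hi ⟨j, hj, v, hvi, hvj⟩
    have hne1 : i ≠ i0 h := ne_of_lt hi
    have hne2 : i ≠ j0 h := ne_of_lt (hi.trans (i0_lt_j0 h))
    have hvi' : v ∈ F i := by rwa [swapF_apply_other h hne1 hne2] at hvi
    have hix : hasIx F i := by
      rcases mem_swapF h hvj with hF | hF | hF
      · exact ⟨j, hj, v, hvi', hF⟩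
      · exact ⟨i0 h, Ne.symm hne1, v, hvi', hF⟩
      · exact ⟨j0 h, Ne.symm hne2, v, hvi', hF⟩
    exact absurd (i0_min h hix) (not_le.mpr hi)
  have hGi0 : hasIx (swapF h) (i0 h) :=
    ⟨j0 h, (j0_spec h).1, v0 h, by rw [swapF_apply_i0 h]; simp,
      by rw [swapF_apply_j0 h]; simp⟩
  have hi0 : i0 h' = i0 h := by
    refine le_antisymm (i0_min h' hGi0) (not_lt.mp fun hlt => hA _ hlt (hasIx_i0 h'))
  -- splitting the swapped family's `i0`-path
  have hdisj : (aL h).Disjoint (v0 h :: bL h) := by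
    have := hNd (i0 h)
    rw [F_i0_eq h] at this
    exact (List.nodup_append'.mp this).2.2
  have hsplit1 : pre (onOther (swapF h) (i0 h)) (swapF h (i0 h)) = aL h ∧
      suf (onOther (swapF h) (i0 h)) (swapF h (i0 h)) = v0 h :: dL h := by
    rw [swapF_apply_i0 h]
    refine pre_eq_of _ _ _ _ ?_ ⟨j0 h, (j0_spec h).1, by rw [swapF_apply_j0 h]; simp⟩
    rintro u hu ⟨j, hj, hvj⟩
    have hu' : ¬ onOther F (i0 h) u := not_onOther_of_mem_aL h hu
    by_cases hj0 : j = j0 h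
    · subst hj0
      rw [swapF_apply_j0 h] at hvj
      rcases List.mem_append.mp hvj with hc | hc
      · exact hu' ⟨j0 h, (j0_spec h).1, mem_of_mem_cL h hc⟩
      · rcases List.mem_cons.mp hc with rfl | hb
        · exact hu' ⟨j0 h, (j0_spec h).1, (j0_spec h).2⟩
        · exact hdisj hu (List.mem_cons_of_mem _ hb)
    · rw [swapF_apply_other h hj hj0] at hvj
      exact hu' ⟨j, hj, hvj⟩
  have hv0 : v0 h' = v0 h := by
    have h1 : (suf (onOther (swapF h) (i0 h')) (swapF h (i0 h'))).head? = some (v0 h') :=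
      List.head?_eq_head _
    rw [hi0, hsplit1.2] at h1
    simpa using h1.symm
  have hj0' : j0 h' = j0 h := by
    have hmem : j0 h ≠ i0 h' ∧ v0 h' ∈ swapF h (j0 h) := by
      rw [hi0, hv0]
      exact ⟨(j0_spec h).1, by rw [swapF_apply_j0 h]; simp⟩
    refine le_antisymm ?_ ?_
    · exact j0_min h' hmem.1 hmem.2
    · have hspec := j0_spec h'
      rw [hi0, hv0] at hspec
      by_cases hc : j0 h' = j0 h
      · exact le_of_eq hc.symm
      · obtain ⟨hs1, hs2⟩ := hspec
        rw [swapF_apply_other h hs1 hc] at hs2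
        exact j0_min h hs1 hs2
  have haL : aL h' = aL h := by
    show pre (onOther (swapF h) (i0 h')) (swapF h (i0 h')) = aL h
    rw [hi0, hsplit1.1]
  have hbL : bL h' = dL h := by
    show (suf (onOther (swapF h) (i0 h')) (swapF h (i0 h'))).tail = dL h
    rw [hi0, hsplit1.2]
    rfl
  -- splitting the swapped family's `j0`-path
  have hsplit2 : pre (fun u => u = v0 h) (swapF h (j0 h)) = cL h ∧
      suf (fun u => u = v0 h) (swapF h (j0 h)) = v0 h :: bL h := by
    rw [swapF_apply_j0 h]
    exact pre_eq_of _ _ _ _ (fun u hu => ne_v0_of_mem_cL h hu) rfl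
  have hcL : cL h' = cL h := by
    show pre (fun u => u = v0 h') (swapF h (j0 h')) = cL h
    rw [hv0, hj0', hsplit2.1]
  have hdL : dL h' = bL h := by
    show (suf (fun u => u = v0 h') (swapF h (j0 h'))).tail = bL h
    rw [hv0, hj0', hsplit2.2]
    rfl
  refine ⟨hi0, hv0, hj0', haL, hbL, hcL, hdL, ?_⟩
  funext k
  show Function.update (Function.update (swapF h) (i0 h') (aL h' ++ v0 h' :: dL h'))
      (j0 h') (cL h' ++ v0 h' :: bL h') k = F k
  rw [hi0, hv0, hj0', haL, hbL, hcL, hdL]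
  by_cases hk : k = j0 h
  · subst hk
    rw [Function.update_self]
    exact (F_j0_eq h).symm
  · rw [Function.update_of_ne hk]
    by_cases hk2 : k = i0 h
    · subst hk2
      rw [Function.update_self]
      exact (F_i0_eq h).symm
    · rw [Function.update_of_ne hk2]
      exact swapF_apply_other h hk2 hk


theorem isFamily_swapF {R : V → V → Prop}
    (hacyc : ∀ (x : V) (l : List V), l ≠ [] → List.Chain R x l → l.getLast? ≠ some x)
    {src snk : Fin n → V} {σ : Equiv.Perm (Fin n)}
    (hF : IsFamily R src snk F σ) (h : Ix F) :
    IsFamily R src snk (swapF h) (σ * Equiv.swap (i0 h) (j0 h)) := by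
  have hnd := nodup_of_chain' hacyc
  have hCi : List.Chain' R (aL h ++ v0 h :: bL h) := by
    rw [← F_i0_eq h]; exact (hF (i0 h)).1.2.1
  have hCj : List.Chain' R (cL h ++ v0 h :: dL h) := by
    rw [← F_j0_eq h]; exact (hF (j0 h)).1.2.1
  have hCi' := (chain'_mid (R := R) _ _ _).mp hCi
  have hCj' := (chain'_mid (R := R) _ _ _).mp hCj
  intro k
  by_cases hk : k = j0 h
  · subst hk
    rw [swapF_apply_j0 h]
    have hch : List.Chain' R (cL h ++ v0 h :: bL h) :=
      (chain'_mid _ _ _).mpr ⟨hCj'.1, hCi'.2⟩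
    refine ⟨⟨by simp, hch, hnd _ hch⟩, ?_, ?_⟩
    · rw [head?_append_cons]
      have hhd := (hF (j0 h)).2.1
      rw [F_j0_eq h, head?_append_cons] at hhd
      exact hhd
    · rw [getLast?_append_cons]
      have hlast := (hF (i0 h)).2.2
      rw [F_i0_eq h, getLast?_append_cons] at hlast
      rw [Equiv.Perm.mul_apply, Equiv.swap_apply_right]
      exact hlast
  · by_cases hk2 : k = i0 h
    · subst hk2
      rw [swapF_apply_i0 h]
      have hch : List.Chain' R (aL h ++ v0 h :: dL h) :=
        (chain'_mid _ _ _).mpr ⟨hCi'.1, hCj'.2⟩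
      refine ⟨⟨by simp, hch, hnd _ hch⟩, ?_, ?_⟩
      · rw [head?_append_cons]
        have hhd := (hF (i0 h)).2.1
        rw [F_i0_eq h, head?_append_cons] at hhd
        exact hhd
      · rw [getLast?_append_cons]
        have hlast := (hF (j0 h)).2.2
        rw [F_j0_eq h, getLast?_append_cons] at hlast
        rw [Equiv.Perm.mul_apply, Equiv.swap_apply_left]
        exact hlast
    · rw [swapF_apply_other h hk2 hk]
      have hFk := hF k
      rwa [show (σ * Equiv.swap (i0 h) (j0 h)) k = σ k by
        rw [Equiv.Perm.mul_apply, Equiv.swap_apply_of_ne_of_ne hk2 hk]]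

lemma ix_iff {F : Fin n → List V} : Ix F ↔ ¬ NonIntersecting F := by
  constructor
  · rintro ⟨i, j, hij, v, hvi, hvj⟩ hNI
    exact hNI i j hij v hvi hvj
  · intro hNI
    by_contra hIx
    exact hNI fun i j hij v hvi hvj => hIx ⟨i, j, hij, v, hvi, hvj⟩

end LGVaux

open LGVaux

/-- **Lindström–Gessel–Viennot.** In a finite acyclic `n`-network, the signed sum over
all families of `n` paths equals the signed sum over the non-intersecting families. -/
theorem lindstrom_gessel_viennot [Fintype V] {n : ℕ}
    (R : V → V → Prop)
    (hacyc : ∀ (x : V) (l : List V), l ≠ [] → List.Chain R x l → l.getLast? ≠ some x)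
    (src snk : Fin n → V)
    (hsrc : Function.Injective src) (hsnk : Function.Injective snk) :
    (∑ᶠ p ∈ {p : (Fin n → List V) × Equiv.Perm (Fin n) |
        IsFamily R src snk p.1 p.2}, (Equiv.Perm.sign p.2 : ℤ))
      = ∑ᶠ p ∈ {p : (Fin n → List V) × Equiv.Perm (Fin n) |
          IsFamily R src snk p.1 p.2 ∧ NonIntersecting p.1},
          (Equiv.Perm.sign p.2 : ℤ) := by
  classical
  have hfinS : {p : (Fin n → List V) × Equiv.Perm (Fin n) |
      IsFamily R src snk p.1 p.2}.Finite := by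
    have h1 : {l : List V | l.length ≤ Fintype.card V}.Finite :=
      List.finite_length_le V (Fintype.card V)
    have h2 : (Set.univ.pi fun _ : Fin n =>
        {l : List V | l.length ≤ Fintype.card V}).Finite := Set.Finite.pi fun _ => h1
    refine Set.Finite.subset (h2.prod Set.finite_univ) ?_
    rintro ⟨F, σ⟩ hp
    exact ⟨fun i _ => ((hp i).1.2.2).length_le_card, Set.mem_univ _⟩
  have hfinT : {p : (Fin n → List V) × Equiv.Perm (Fin n) |
      IsFamily R src snk p.1 p.2 ∧ NonIntersecting p.1}.Finite :=
    hfinS.subset fun p hp => hp.1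
  rw [← Set.Finite.coe_toFinset hfinS, ← Set.Finite.coe_toFinset hfinT,
    finsum_mem_coe_finset, finsum_mem_coe_finset]
  have hmemS : ∀ q : (Fin n → List V) × Equiv.Perm (Fin n),
      q ∈ hfinS.toFinset ↔ IsFamily R src snk q.1 q.2 := fun q => by
    rw [Set.Finite.mem_toFinset]; rfl
  have hmemT : ∀ q : (Fin n → List V) × Equiv.Perm (Fin n),
      q ∈ hfinT.toFinset ↔ IsFamily R src snk q.1 q.2 ∧ NonIntersecting q.1 := fun q => by
    rw [Set.Finite.mem_toFinset]; rfl
  have hTS : hfinT.toFinset ⊆ hfinS.toFinset := by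
    intro p hp
    rw [hmemS]
    exact ((hmemT p).mp hp).1
  rw [← Finset.sum_sdiff hTS]
  have hmem : ∀ p ∈ hfinS.toFinset \ hfinT.toFinset,
      IsFamily R src snk p.1 p.2 ∧ Ix p.1 := by
    intro p hp
    rw [Finset.mem_sdiff, hmemS, hmemT] at hp
    obtain ⟨h1, h2⟩ := hp
    exact ⟨h1, ix_iff.mpr fun hNI => h2 ⟨h1, hNI⟩⟩
  have hzero : ∑ p ∈ hfinS.toFinset \ hfinT.toFinset,
      ((Equiv.Perm.sign p.2 : ℤˣ) : ℤ) = 0 := by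
    refine Finset.sum_involution
      (fun p hp => (swapF (hmem p hp).2,
        p.2 * Equiv.swap (i0 (hmem p hp).2) (j0 (hmem p hp).2))) ?_ ?_ ?_ ?_
    · intro p hp
      have hne : i0 (hmem p hp).2 ≠ j0 (hmem p hp).2 := ne_of_lt (i0_lt_j0 _)
      simp only [map_mul, Equiv.Perm.sign_swap hne, Units.val_mul, Units.val_neg,
        Units.val_one]
      ring
    · intro p hp _ hgp
      have h2 := congrArg Prod.snd hgp
      simp only at h2
      have hswap : Equiv.swap (i0 (hmem p hp).2) (j0 (hmem p hp).2) = 1 :=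
        mul_eq_left.mp h2
      have hne : i0 (hmem p hp).2 ≠ j0 (hmem p hp).2 := ne_of_lt (i0_lt_j0 _)
      apply hne
      have := congrArg (fun e : Equiv.Perm (Fin n) => e (i0 (hmem p hp).2)) hswap
      simpa using this.symm
    · intro p hp
      rw [Finset.mem_sdiff]
      constructor
      · rw [hmemS]
        exact isFamily_swapF hacyc (hmem p hp).1 (hmem p hp).2
      · rw [hmemT]
        rintro ⟨-, hNI⟩
        exact ix_iff.mp (ix_swapF (hmem p hp).2) hNI
    · intro p hp
      have hNd : ∀ i, (p.1 i).Nodup := fun i => ((hmem p hp).1 i).1.2.2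
      have hgmem : (swapF (hmem p hp).2,
          p.2 * Equiv.swap (i0 (hmem p hp).2) (j0 (hmem p hp).2)) ∈
          hfinS.toFinset \ hfinT.toFinset := by
        rw [Finset.mem_sdiff]
        constructor
        · rw [hmemS]
          exact isFamily_swapF hacyc (hmem p hp).1 (hmem p hp).2
        · rw [hmemT]
          rintro ⟨-, hNI⟩
          exact ix_iff.mp (ix_swapF (hmem p hp).2) hNI
      have h' : Ix (swapF (hmem p hp).2) := (hmem _ hgmem).2
      obtain ⟨hi0, hv0, hj0, haL, hbL, hcL, hdL, hFF⟩ :=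
        swap_inv hNd (hmem p hp).2 h'
      refine Prod.ext ?_ ?_
      · exact hFF
      · show (p.2 * Equiv.swap (i0 (hmem p hp).2) (j0 (hmem p hp).2)) *
            Equiv.swap (i0 h') (j0 h') = p.2
        rw [hi0, hj0, mul_assoc, Equiv.swap_mul_self, mul_one]
  rw [hzero, zero_add]
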